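/- Let n ≥ 3, let K ⊆ ℝⁿ be a proper self-dual cone (K = K*), let A ∈ ℝ^{n×n} be symmetric with at least two distinct eigenvalues, and let {v¹, …, vⁿ} be an orthonormal system of eigenvectors of A with A vⁱ = λᵢ vⁱ and λ₁ ≤ λ₂ ≤ ⋯ ≤ λₙ. Suppose v¹ ∈ K and that the function x ↦ ⟨Ax, x⟩ is not constant on S^{n−1} ∩ K. Then the sublevel set [φ_A ≤ c] = {x ∈ int(K) : ⟨Ax, x⟩ ≤ c‖x‖²} is convex for every c ∈ ℝ (equivalently, q_A is spherically quasi-convex) if and only if λ₁ < λ₂ (the smallest eigenvalue has multiplicity one) and λ₂Iₙ − A is K-copositive. -/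

import Mathlib

open scoped RealInnerProductSpace

/-- The quadratic form `x ↦ ⟨A x, x⟩` associated with a matrix `A`. -/
noncomputable def quadForm {n : ℕ} (A : Matrix (Fin n) (Fin n) ℝ)
    (x : EuclideanSpace ℝ (Fin n)) : ℝ :=
  ⟪Matrix.toEuclideanLin A x, x⟫

/-- `K` is a cone: closed under multiplication by positive scalars. -/
def IsCone {n : ℕ} (K : Set (EuclideanSpace ℝ (Fin n))) : Prop :=
  ∀ ⦃t : ℝ⦄, 0 < t → ∀ ⦃x⦄, x ∈ K → t • x ∈ K

/-- A proper cone: a pointed closed convex cone with nonempty interior. -/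
def IsProperCone {n : ℕ} (K : Set (EuclideanSpace ℝ (Fin n))) : Prop :=
  IsCone K ∧ Convex ℝ K ∧ IsClosed K ∧ K ∩ (-K) ⊆ {0} ∧ (interior K).Nonempty

/-- The dual cone `K* = {u : ⟨u, y⟩ ≥ 0 for all y ∈ K}`. -/
def dualCone {n : ℕ} (K : Set (EuclideanSpace ℝ (Fin n))) : Set (EuclideanSpace ℝ (Fin n)) :=
  {u | ∀ y ∈ K, 0 ≤ ⟪u, y⟫}

/-- The sublevel set `[φ_A ≤ c] = {x ∈ int K : ⟨A x, x⟩ ≤ c ‖x‖²}`. -/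
noncomputable def sublevel {n : ℕ} (A : Matrix (Fin n) (Fin n) ℝ)
    (K : Set (EuclideanSpace ℝ (Fin n))) (c : ℝ) : Set (EuclideanSpace ℝ (Fin n)) :=
  {x ∈ interior K | quadForm A x ≤ c * ‖x‖ ^ 2}

section Aux
set_option linter.unusedSectionVars false
set_option linter.deprecated false
variable {n : ℕ} [NeZero n]

local notation "E" => EuclideanSpace ℝ (Fin n)

private lemma aux_sum_repr {v : Fin n → E} (hv : Orthonormal ℝ v) (x : E) :
    ∑ i, ⟪v i, x⟫ • v i = x := by
  have card : Fintype.card (Fin n) = Module.finrank ℝ E := by simp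
  have hb : ⇑(basisOfOrthonormalOfCardEqFinrank hv card) = v :=
    coe_basisOfOrthonormalOfCardEqFinrank hv card
  have hsp : ⊤ ≤ Submodule.span ℝ (Set.range v) := by
    rw [← hb]; exact (basisOfOrthonormalOfCardEqFinrank hv card).span_eq.ge
  have hob : ⇑(OrthonormalBasis.mk hv hsp) = v := OrthonormalBasis.coe_mk _ _
  simpa [hob] using (OrthonormalBasis.mk hv hsp).sum_repr' x

private lemma aux_sym {A : Matrix (Fin n) (Fin n) ℝ} (hA : A.IsSymm) (x y : E) :
    ⟪Matrix.toEuclideanLin A x, y⟫ = ⟪x, Matrix.toEuclideanLin A y⟫ := by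
  have herm : A.IsHermitian := (Matrix.conjTranspose_eq_transpose_of_trivial A).trans hA
  exact Matrix.isHermitian_iff_isSymmetric.mp herm x y

private lemma aux_nsum {v : Fin n → E} (hv : Orthonormal ℝ v) (x : E) :
    ‖x‖ ^ 2 = ∑ i, ⟪v i, x⟫ ^ 2 := by
  rw [← real_inner_self_eq_norm_sq]
  nth_rewrite 2 [← aux_sum_repr hv x]
  rw [inner_sum]
  refine Finset.sum_congr rfl fun i _ => ?_
  rw [real_inner_smul_right, real_inner_comm]; ring

private lemma aux_qsum {A : Matrix (Fin n) (Fin n) ℝ} (hA : A.IsSymm) {v : Fin n → E}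
    (hv : Orthonormal ℝ v) {lam : Fin n → ℝ}
    (heig : ∀ i, Matrix.toEuclideanLin A (v i) = lam i • v i) (x : E) :
    quadForm A x = ∑ i, lam i * ⟪v i, x⟫ ^ 2 := by
  unfold quadForm
  nth_rewrite 2 [← aux_sum_repr hv x]
  rw [inner_sum]
  refine Finset.sum_congr rfl fun i _ => ?_
  rw [real_inner_smul_right, aux_sym hA, heig, real_inner_smul_right, real_inner_comm]
  ring

private lemma aux_lower {A : Matrix (Fin n) (Fin n) ℝ} (hA : A.IsSymm) {v : Fin n → E}
    (hv : Orthonormal ℝ v) {lam : Fin n → ℝ}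
    (heig : ∀ i, Matrix.toEuclideanLin A (v i) = lam i • v i) (hmono : Monotone lam) (x : E) :
    lam 0 * ‖x‖ ^ 2 ≤ quadForm A x := by
  rw [aux_qsum hA hv heig, aux_nsum hv, Finset.mul_sum]
  refine Finset.sum_le_sum fun i _ => ?_
  have h := hmono (Fin.zero_le i)
  nlinarith [sq_nonneg (⟪v i, x⟫ : ℝ)]

private lemma aux_zero_notin {K : Set E} (hpt : K ∩ (-K) ⊆ {0}) {u : E} (hu : ‖u‖ = 1) :
    (0 : E) ∉ interior K := by
  intro h0
  obtain ⟨ε, hε0, hball⟩ := Metric.mem_nhds_iff.mp (mem_interior_iff_mem_nhds.mp h0)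
  have hmem : ∀ w : E, ‖w‖ = ε/2 → w ∈ K := by
    intro w hw
    apply hball
    rw [Metric.mem_ball, dist_zero_right, hw]
    linarith
  have h1 : (ε/2) • u ∈ K := hmem _ (by
    rw [norm_smul, hu, Real.norm_eq_abs, abs_of_pos (by linarith)]; ring)
  have h2 : -((ε/2) • u) ∈ K := hmem _ (by
    rw [norm_neg, norm_smul, hu, Real.norm_eq_abs, abs_of_pos (by linarith)]; ring)
  have hm : (ε/2) • u ∈ K ∩ (-K) := ⟨h1, by rwa [Set.mem_neg]⟩
  have := hpt hm
  simp only [Set.mem_singleton_iff, smul_eq_zero] at this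
  rcases this with h | h
  · linarith
  · rw [h] at hu; simp at hu

private lemma aux_dense {K C : Set E} (hKconv : Convex ℝ K) (hint : (interior K).Nonempty)
    (hC : IsClosed C) (hsub : interior K ⊆ C) : K ⊆ C := by
  obtain ⟨e, he⟩ := hint
  intro x hx
  have hseq : ∀ k : ℕ, x + (1/(k+1) : ℝ) • (e - x) ∈ C := by
    intro k
    apply hsub
    apply hKconv.add_smul_sub_mem_interior hx he
    constructor
    · positivity
    · rw [div_le_one (by positivity)]
      linarith [Nat.cast_nonneg (α := ℝ) k]
  have h0 : Filter.Tendsto (fun k : ℕ => (1/(k+1) : ℝ)) Filter.atTop (nhds 0) :=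
    tendsto_one_div_add_atTop_nhds_zero_nat
  have htend : Filter.Tendsto (fun k : ℕ => x + (1/(k+1) : ℝ) • (e - x)) Filter.atTop (nhds x) := by
    have := (h0.smul_const (e - x)).const_add x
    simpa using this
  exact hC.mem_of_tendsto htend (Filter.Eventually.of_forall hseq)

private lemma aux_quad_cont {A : Matrix (Fin n) (Fin n) ℝ} : Continuous (quadForm A) := by
  unfold quadForm
  exact (Matrix.toEuclideanLin A).continuous_of_finiteDimensional.inner continuous_id

private lemma aux_quad_sub (A : Matrix (Fin n) (Fin n) ℝ) (μ : ℝ) (x : E) :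
    quadForm (μ • (1 : Matrix (Fin n) (Fin n) ℝ) - A) x = μ * ‖x‖ ^ 2 - quadForm A x := by
  unfold quadForm
  have h1 : Matrix.toEuclideanLin (μ • (1 : Matrix (Fin n) (Fin n) ℝ) - A) x
      = μ • (Matrix.toEuclideanLin (1 : Matrix (Fin n) (Fin n) ℝ) x)
        - Matrix.toEuclideanLin A x := by
    rw [map_sub, map_smul]
    rfl
  have h2 : Matrix.toEuclideanLin (1 : Matrix (Fin n) (Fin n) ℝ) x = x := by
    rw [Matrix.toEuclideanLin_apply, Matrix.one_mulVec]
  rw [h1, h2, inner_sub_left, real_inner_smul_left, real_inner_self_eq_norm_sq]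

private lemma aux_nec {K : Set E} (hKpt : K ∩ (-K) ⊆ {0})
    {A : Matrix (Fin n) (Fin n) ℝ} (hA : A.IsSymm) {v : Fin n → E} (hv : Orthonormal ℝ v)
    {lam : Fin n → ℝ} (heig : ∀ i, Matrix.toEuclideanLin A (v i) = lam i • v i)
    (h01 : lam 0 ≤ lam 1) (hone : ((1 : Fin n) : ℕ) = 1)
    (hconv : ∀ c : ℝ, Convex ℝ (sublevel A K c))
    {x : E} (hxint : x ∈ interior K) : quadForm A x ≤ lam 1 * ‖x‖ ^ 2 := by
  by_contra hgt
  push_neg at hgt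
  have hx0 : x ≠ 0 := by
    intro h; exact aux_zero_notin hKpt (hv.1 0) (h ▸ hxint)
  have hxn : 0 < ‖x‖ := norm_pos_iff.mpr hx0
  have hr : (0:ℝ) < ‖x‖ ^ 2 := by positivity
  set φ : ℝ := quadForm A x / ‖x‖ ^ 2 with hφdef
  have hφx : φ * ‖x‖ ^ 2 = quadForm A x := div_mul_cancel₀ _ (ne_of_gt hr)
  have hφgt : lam 1 < φ := (lt_div_iff₀ hr).2 hgt
  set g : E := Matrix.toEuclideanLin A x - φ • x with hgdef
  have h01ne : (0 : Fin n) ≠ 1 := by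
    intro h; have := congrArg Fin.val h; rw [hone] at this; simp at this
  obtain ⟨d, hd0, hdg, hdq⟩ :
      ∃ d : E, d ≠ 0 ∧ ⟪g, d⟫ = 0 ∧ quadForm A d ≤ lam 1 * ‖d‖ ^ 2 := by
    by_cases ha : ⟪g, v 0⟫ = 0
    · refine ⟨v 0, ?_, ha, ?_⟩
      · intro h; have := hv.1 0; rw [h] at this; simp at this
      · have hq0 : quadForm A (v 0) = lam 0 := by
          unfold quadForm
          rw [heig, real_inner_smul_left, real_inner_self_eq_norm_sq, hv.1 0]
          ring
        rw [hq0, hv.1 0]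
        simpa using h01
    · set a : ℝ := ⟪g, v 0⟫ with hadef
      set b : ℝ := ⟪g, v 1⟫ with hbdef
      set d : E := b • v 0 - a • v 1 with hddef
      have h00 : ⟪v 0, v 0⟫ = (1:ℝ) := by
        rw [real_inner_self_eq_norm_sq, hv.1 0]; norm_num
      have h11 : ⟪v 1, v 1⟫ = (1:ℝ) := by
        rw [real_inner_self_eq_norm_sq, hv.1 1]; norm_num
      have h01' : ⟪v 0, v 1⟫ = (0:ℝ) := hv.2 h01ne
      have h10' : ⟪v 1, v 0⟫ = (0:ℝ) := by rw [real_inner_comm]; exact h01'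
      have hnd : ‖d‖ ^ 2 = b ^ 2 + a ^ 2 := by
        rw [← real_inner_self_eq_norm_sq, hddef]
        simp only [inner_sub_left, inner_sub_right, real_inner_smul_left, real_inner_smul_right,
          h00, h11, h01', h10']
        ring
      refine ⟨d, ?_, ?_, ?_⟩
      · intro h
        rw [h, norm_zero] at hnd
        norm_num at hnd
        apply ha
        nlinarith [sq_nonneg a, sq_nonneg b]
      · rw [hddef, inner_sub_right, real_inner_smul_right, real_inner_smul_right]
        rw [← hadef, ← hbdef]; ring
      · have hAd : Matrix.toEuclideanLin A d = b • (lam 0 • v 0) - a • (lam 1 • v 1) := by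
          rw [hddef, map_sub, map_smul, map_smul, heig, heig]
        have hqd : quadForm A d = lam 0 * b ^ 2 + lam 1 * a ^ 2 := by
          unfold quadForm
          rw [hAd, hddef]
          simp only [inner_sub_left, inner_sub_right, real_inner_smul_left,
            real_inner_smul_right, h00, h11, h01', h10']
          ring
        rw [hqd, hnd]
        nlinarith [sq_nonneg b]
  obtain ⟨ρ, hρ0, hball⟩ := Metric.isOpen_iff.mp isOpen_interior x hxint
  set ε : ℝ := ρ / (2 * (‖d‖ + 1)) with hεdef
  have hdn : (0:ℝ) ≤ ‖d‖ := norm_nonneg d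
  have hε0 : 0 < ε := by positivity
  have hmem : ∀ τ : ℝ, |τ| = ε → x + τ • d ∈ interior K := by
    intro τ hτ
    apply hball
    rw [Metric.mem_ball, dist_eq_norm, add_sub_cancel_left, norm_smul, Real.norm_eq_abs, hτ,
      hεdef, div_mul_eq_mul_div, div_lt_iff₀ (by positivity)]
    nlinarith
  have hPd := hmem ε (abs_of_pos hε0)
  have hMd := hmem (-ε) (by rw [abs_neg]; exact abs_of_pos hε0)
  have hval : ∀ τ : ℝ, quadForm A (x + τ • d) - φ * ‖x + τ • d‖ ^ 2
      = τ ^ 2 * (quadForm A d - φ * ‖d‖ ^ 2) := by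
    intro τ
    have hgd : ⟪Matrix.toEuclideanLin A x, d⟫ - φ * ⟪x, d⟫ = 0 := by
      have h1 : ⟪g, d⟫ = ⟪Matrix.toEuclideanLin A x, d⟫ - φ * ⟪x, d⟫ := by
        rw [hgdef, inner_sub_left, real_inner_smul_left]
      rw [← h1, hdg]
    have expq : quadForm A (x + τ • d)
        = quadForm A x + 2 * τ * ⟪Matrix.toEuclideanLin A x, d⟫ + τ ^ 2 * quadForm A d := by
      unfold quadForm
      rw [map_add, map_smul]
      rw [inner_add_left, inner_add_right, inner_add_right, real_inner_smul_left,
        real_inner_smul_left, real_inner_smul_right, real_inner_smul_right]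
      have hc : ⟪Matrix.toEuclideanLin A d, x⟫ = ⟪Matrix.toEuclideanLin A x, d⟫ := by
        rw [aux_sym hA d x, real_inner_comm]
      rw [hc]
      ring
    have expn : ‖x + τ • d‖ ^ 2 = ‖x‖ ^ 2 + 2 * τ * ⟪x, d⟫ + τ ^ 2 * ‖d‖ ^ 2 := by
      rw [norm_add_sq_real, real_inner_smul_right, norm_smul, Real.norm_eq_abs, mul_pow, sq_abs]
      ring
    rw [expq, expn]
    linear_combination 2 * τ * hgd - hφx
  have hd2 : (0:ℝ) < ‖d‖ ^ 2 := by
    have := norm_pos_iff.mpr hd0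
    positivity
  have hneg : quadForm A d - φ * ‖d‖ ^ 2 < 0 := by
    have := mul_lt_mul_of_pos_right hφgt hd2
    linarith
  set e₁ : E := x + ε • d with he₁
  set e₂ : E := x + (-ε) • d with he₂
  have he₁0 : e₁ ≠ 0 := fun h => aux_zero_notin hKpt (hv.1 0) (h ▸ hPd)
  have he₂0 : e₂ ≠ 0 := fun h => aux_zero_notin hKpt (hv.1 0) (h ▸ hMd)
  have hr₁ : (0:ℝ) < ‖e₁‖ ^ 2 := by have := norm_pos_iff.mpr he₁0; positivity
  have hr₂ : (0:ℝ) < ‖e₂‖ ^ 2 := by have := norm_pos_iff.mpr he₂0; positivity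
  have hε2 : (0:ℝ) < ε ^ 2 := by positivity
  have hlt₁ : quadForm A e₁ < φ * ‖e₁‖ ^ 2 := by
    have h := hval ε
    have := mul_neg_of_pos_of_neg hε2 hneg
    linarith
  have hlt₂ : quadForm A e₂ < φ * ‖e₂‖ ^ 2 := by
    have h := hval (-ε)
    have h2 : (-ε) ^ 2 = ε ^ 2 := by ring
    rw [h2] at h
    have := mul_neg_of_pos_of_neg hε2 hneg
    linarith
  set c : ℝ := max (quadForm A e₁ / ‖e₁‖ ^ 2) (quadForm A e₂ / ‖e₂‖ ^ 2) with hcdef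
  have hc₁ : quadForm A e₁ ≤ c * ‖e₁‖ ^ 2 :=
    (div_le_iff₀ hr₁).mp (le_max_left _ _)
  have hc₂ : quadForm A e₂ ≤ c * ‖e₂‖ ^ 2 :=
    (div_le_iff₀ hr₂).mp (le_max_right _ _)
  have hcφ : c < φ := by
    apply max_lt
    · exact (div_lt_iff₀ hr₁).2 hlt₁
    · exact (div_lt_iff₀ hr₂).2 hlt₂
  have hmid : (1/2 : ℝ) • e₁ + (1/2 : ℝ) • e₂ = x := by
    rw [he₁, he₂]
    module
  have hxmem : x ∈ sublevel A K c := by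
    have := hconv c ⟨hPd, hc₁⟩ ⟨hMd, hc₂⟩ (by norm_num : (0:ℝ) ≤ 1/2)
      (by norm_num : (0:ℝ) ≤ 1/2) (by norm_num)
    rwa [hmid] at this
  have hxq : quadForm A x ≤ c * ‖x‖ ^ 2 := hxmem.2
  have := mul_lt_mul_of_pos_right hcφ hr
  linarith

end Aux

set_option maxHeartbeats 1000000 in
/-- Theorem 1(iv) of the paper: for a proper self-dual cone `K`, a symmetric `A` with at
least two distinct eigenvalues, `v¹ ∈ K` and `q_A` not constant on `S^{n-1} ∩ K`,
all sublevel sets `[φ_A ≤ c]` are convex iff `λ₁ < λ₂` and `λ₂Iₙ - A` is `K`-copositive. -/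
theorem stmt12 (n : ℕ) [NeZero n] (hn : 3 ≤ n)
    (K : Set (EuclideanSpace ℝ (Fin n))) (hK : IsProperCone K) (hself : dualCone K = K)
    (A : Matrix (Fin n) (Fin n) ℝ) (hA : A.IsSymm)
    (v : Fin n → EuclideanSpace ℝ (Fin n)) (hv : Orthonormal ℝ v)
    (lam : Fin n → ℝ) (heig : ∀ i, Matrix.toEuclideanLin A (v i) = lam i • v i)
    (hmono : Monotone lam) (hdistinct : lam 0 < lam ⟨n - 1, by omega⟩)
    (hv1 : v 0 ∈ K)
    (hnc : ¬ ∀ x ∈ K, ∀ y ∈ K, ‖x‖ = 1 → ‖y‖ = 1 → quadForm A x = quadForm A y) :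
    (∀ c : ℝ, Convex ℝ (sublevel A K c)) ↔
      (lam 0 < lam 1 ∧
        ∀ x ∈ K, 0 ≤ quadForm (lam 1 • (1 : Matrix (Fin n) (Fin n) ℝ) - A) x) := by
  obtain ⟨hKcone, hKconv, hKclosed, hKpt, hKint⟩ := hK
  have hone : ((1 : Fin n) : ℕ) = 1 := by
    have h1 : ((1 : Fin n) : ℕ) = 1 % n := rfl
    rw [h1, Nat.mod_eq_of_lt (by omega)]
  have h01 : lam 0 ≤ lam 1 := hmono (Fin.zero_le 1)
  constructor
  · -- necessity
    intro hconv
    have hmain : ∀ x ∈ interior K, quadForm A x ≤ lam 1 * ‖x‖ ^ 2 :=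
      fun x hx => aux_nec hKpt hA hv heig h01 hone hconv hx
    have hcont2 : Continuous fun x : EuclideanSpace ℝ (Fin n) => lam 1 * ‖x‖ ^ 2 :=
      continuous_const.mul (continuous_norm.pow 2)
    have hK_le : ∀ x ∈ K, quadForm A x ≤ lam 1 * ‖x‖ ^ 2 := by
      have hC : IsClosed {x : EuclideanSpace ℝ (Fin n) | quadForm A x ≤ lam 1 * ‖x‖ ^ 2} :=
        isClosed_le aux_quad_cont hcont2
      exact fun x hx => aux_dense hKconv hKint hC hmain hx
    constructor
    · rcases lt_or_eq_of_le h01 with h | h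
      · exact h
      · exfalso
        apply hnc
        have hCeq : K ⊆ {x : EuclideanSpace ℝ (Fin n) | quadForm A x = lam 0 * ‖x‖ ^ 2} := by
          apply aux_dense hKconv hKint
          · exact isClosed_eq aux_quad_cont (continuous_const.mul (continuous_norm.pow 2))
          · intro x hx
            have h1 := hmain x hx
            have h2 := aux_lower hA hv heig hmono x
            rw [← h] at h1
            exact le_antisymm h1 h2
        intro x hx y hy hx1 hy1
        have hx' := hCeq hx
        have hy' := hCeq hy
        simp only [Set.mem_setOf_eq] at hx' hy'
        rw [hx', hy', hx1, hy1]
    · intro x hx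
      rw [aux_quad_sub]
      linarith [hK_le x hx]
  · -- sufficiency
    rintro ⟨hlt, hcop⟩ c
    rcases le_or_gt (lam 1) c with hc1 | hc1
    · have hEq : sublevel A K c = interior K := by
        ext x
        constructor
        · exact fun h => h.1
        · intro hx
          refine ⟨hx, ?_⟩
          have hco := hcop x (interior_subset hx)
          rw [aux_quad_sub] at hco
          have h3 := mul_le_mul_of_nonneg_right hc1 (sq_nonneg ‖x‖)
          linarith
      rw [hEq]; exact hKconv.interior
    · rcases lt_or_ge c (lam 0) with hc0 | hc0
      · have hEq : sublevel A K c = ∅ := by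
          apply Set.eq_empty_iff_forall_notMem.mpr
          rintro x ⟨hxint, hxq⟩
          have hx0 : x ≠ 0 := fun h => aux_zero_notin hKpt (hv.1 0) (h ▸ hxint)
          have hr : (0:ℝ) < ‖x‖ ^ 2 := by have := norm_pos_iff.mpr hx0; positivity
          have hlow := aux_lower hA hv heig hmono x
          have := mul_lt_mul_of_pos_right hc0 hr
          linarith
        rw [hEq]; exact convex_empty
      · -- lam 0 ≤ c < lam 1
        have h1le : ∀ i : Fin n, i ≠ 0 → c ≤ lam i := by
          intro i hi
          have hvne : (i : ℕ) ≠ 0 := fun h => hi (Fin.ext (by simp [h]))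
          have hle : (1 : Fin n) ≤ i := by rw [Fin.le_def, hone]; omega
          exact le_trans hc1.le (hmono hle)
        set β : ℝ := Real.sqrt (c - lam 0) with hβ
        have hβ0 : 0 ≤ β := Real.sqrt_nonneg _
        have hβsq : β ^ 2 = c - lam 0 := Real.sq_sqrt (by linarith)
        set F : EuclideanSpace ℝ (Fin n) → EuclideanSpace ℝ (Fin n) :=
          fun x => (WithLp.equiv 2 (Fin n → ℝ)).symm
            (fun i => if i = 0 then 0 else Real.sqrt (lam i - c) * ⟪v i, x⟫) with hFdef
        have hFapp : ∀ (x : EuclideanSpace ℝ (Fin n)) (i : Fin n), F x i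
            = if i = 0 then 0 else Real.sqrt (lam i - c) * ⟪v i, x⟫ := fun x i => rfl
        have hFsq : ∀ (x : EuclideanSpace ℝ (Fin n)) (i : Fin n),
            (F x i) ^ 2 = if i = 0 then 0 else (lam i - c) * ⟪v i, x⟫ ^ 2 := by
          intro x i
          by_cases hi : i = 0
          · simp [hFapp, hi]
          · rw [hFapp]
            simp only [hi, if_false]
            rw [mul_pow, Real.sq_sqrt (by linarith [h1le i hi])]
        have hkey : ∀ x : EuclideanSpace ℝ (Fin n), quadForm A x - c * ‖x‖ ^ 2
            = (lam 0 - c) * ⟪v 0, x⟫ ^ 2 + ∑ i, (F x i) ^ 2 := by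
          intro x
          rw [aux_qsum hA hv heig, aux_nsum hv, Finset.mul_sum, ← Finset.sum_sub_distrib]
          have hterm : ∀ i ∈ Finset.univ, lam i * ⟪v i, x⟫ ^ 2 - c * ⟪v i, x⟫ ^ 2
              = (if i = (0:Fin n) then (lam 0 - c) * ⟪v 0, x⟫ ^ 2 else 0) + (F x i) ^ 2 := by
            intro i _
            rw [hFsq]
            by_cases hi : i = 0
            · rw [hi]; simp; ring
            · simp [hi]; ring
          rw [Finset.sum_congr rfl hterm, Finset.sum_add_distrib,
            Finset.sum_ite_eq' Finset.univ (0 : Fin n)]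
          simp [add_comm]
        have hnormF : ∀ x : EuclideanSpace ℝ (Fin n), ‖F x‖ ^ 2 = ∑ i, (F x i) ^ 2 := by
          intro x
          rw [← real_inner_self_eq_norm_sq, PiLp.inner_apply]
          simp [RCLike.inner_apply, sq]
        have hσ : ∀ x ∈ K, (0:ℝ) ≤ ⟪v 0, x⟫ := by
          intro x hx
          have hx' : x ∈ dualCone K := by rw [hself]; exact hx
          have := hx' (v 0) hv1
          rwa [real_inner_comm] at this
        have hiff : ∀ x ∈ K, (quadForm A x ≤ c * ‖x‖ ^ 2 ↔ ‖F x‖ ≤ β * ⟪v 0, x⟫) := by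
          intro x hx
          have h0 := hσ x hx
          have hk := hkey x
          have hFn := hnormF x
          constructor
          · intro h
            have h2 : ‖F x‖ ^ 2 ≤ (β * ⟪v 0, x⟫) ^ 2 := by
              rw [hFn, mul_pow, hβsq]
              nlinarith
            have h3 : 0 ≤ β * ⟪v 0, x⟫ := mul_nonneg hβ0 h0
            calc ‖F x‖ = Real.sqrt (‖F x‖ ^ 2) := (Real.sqrt_sq (norm_nonneg _)).symm
              _ ≤ Real.sqrt ((β * ⟪v 0, x⟫) ^ 2) := Real.sqrt_le_sqrt h2
              _ = β * ⟪v 0, x⟫ := Real.sqrt_sq h3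
          · intro h
            have h2 : ‖F x‖ ^ 2 ≤ (β * ⟪v 0, x⟫) ^ 2 := pow_le_pow_left₀ (norm_nonneg _) h 2
            rw [hFn, mul_pow, hβsq] at h2
            nlinarith
        rintro p ⟨hpI, hpq⟩ r ⟨hrI, hrq⟩ t s ht hs hts
        have hmidI : t • p + s • r ∈ interior K := hKconv.interior hpI hrI ht hs hts
        refine ⟨hmidI, ?_⟩
        have hFp := (hiff p (interior_subset hpI)).1 hpq
        have hFr := (hiff r (interior_subset hrI)).1 hrq
        apply (hiff _ (interior_subset hmidI)).2
        have hFlin : F (t • p + s • r) = t • F p + s • F r := by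
          ext i
          simp only [hFapp, PiLp.add_apply, PiLp.smul_apply, smul_eq_mul]
          by_cases hi : i = 0
          · simp [hi]
          · simp only [hi, if_false, inner_add_right, real_inner_smul_right]
            ring
        calc ‖F (t • p + s • r)‖ = ‖t • F p + s • F r‖ := by rw [hFlin]
          _ ≤ ‖t • F p‖ + ‖s • F r‖ := norm_add_le _ _
          _ = t * ‖F p‖ + s * ‖F r‖ := by
              rw [norm_smul, norm_smul, Real.norm_eq_abs, Real.norm_eq_abs,
                abs_of_nonneg ht, abs_of_nonneg hs]
          _ ≤ t * (β * ⟪v 0, p⟫) + s * (β * ⟪v 0, r⟫) :=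
              add_le_add (mul_le_mul_of_nonneg_left hFp ht) (mul_le_mul_of_nonneg_left hFr hs)
          _ = β * ⟪v 0, t • p + s • r⟫ := by
              rw [inner_add_right, real_inner_smul_right, real_inner_smul_right]; ring
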